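/- Let (D_λ)_{λ∈Λ} be a family of Prüfer domains and R = ∏_{λ∈Λ} D_λ. Then: (1) for every prime ideal 𝔓 of R there exists an ultrafilter U in B with 𝔓 ⊆ (U); (2) if 𝔓 is a prime ideal of R and U is an ultrafilter in B with 𝔓 ⊆ (U), then 𝔓 = ⋃_{x ∈ 𝔓} (U)^{g(x)}, where each (U)^{g(x)} = {r ∈ R | ∃ Y ∈ U ∃ n ∈ ℕ ∀ λ ∈ Λ ∀ P ∈ Y_λ, x_λ divides r_λ^n in the localization of D_λ at P} is a prime ideal of R contained in (U); (3) conversely, for every ultrafilter U in B and every nonempty subset X ⊆ (U), the union ⋃_{x ∈ X} (U)^{g(x)} is a prime ideal of R (the prime ideals of R contained in (U) and containing (0)_{F_U} form a chain under inclusion). -/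

import Mathlib

/-!
Common setup: `Λ` is an index set, `D λ` a family of commutative rings,
`R = ∏ λ, D λ` the product ring, and
`B = ∏ λ, P(max (D λ))` the product Boolean algebra of the power sets of the
sets of maximal ideals, realized as the Pi type `∀ l, Set (MaximalSpectrum (D l))`
with its componentwise Boolean algebra structure (meet = componentwise ∩,
join = componentwise ∪, `⊥ = (∅)_λ`, complement componentwise, order = componentwise ⊆).
-/

variable {Λ : Type*} {D : Λ → Type*}

/-- `S(a) = (V(a_λ))_λ ∈ B`, where `V(x)` is the set of maximal ideals containing `x`. -/
def SFam [∀ l, CommRing (D l)] (a : ∀ l, D l) : ∀ l, Set (MaximalSpectrum (D l)) :=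
  fun l => {P | a l ∈ P.asIdeal}

/-- `z(x) = {λ | x_λ = 0}`. -/
def ZFam [∀ l, CommRing (D l)] (x : ∀ l, D l) : Set Λ := {l | x l = 0}

/-- A filter in a Boolean algebra: a nonempty subset not containing `⊥`, closed
under meets, and upward closed. -/
def IsBFilter {B : Type*} [BooleanAlgebra B] (U : Set B) : Prop :=
  U.Nonempty ∧ ⊥ ∉ U ∧ (∀ X ∈ U, ∀ Y ∈ U, X ⊓ Y ∈ U) ∧ (∀ Y ∈ U, ∀ Z, Y ≤ Z → Z ∈ U)

/-- An ultrafilter in a Boolean algebra: a filter containing `Y` or `Yᶜ` for every `Y`. -/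
def IsBUltrafilter {B : Type*} [BooleanAlgebra B] (U : Set B) : Prop :=
  IsBFilter U ∧ ∀ Y, Y ∈ U ∨ Yᶜ ∈ U

/-- Property (+): for all `r` and all nonzero `a` there is `d` lying in every maximal
ideal containing `a` but not `r`, and in no maximal ideal containing `r`. -/
def PropertyPlus (A : Type*) [CommRing A] : Prop :=
  ∀ r a : A, a ≠ 0 → ∃ d : A,
    (∀ M : Ideal A, M.IsMaximal → a ∈ M → r ∉ M → d ∈ M) ∧
    (∀ M : Ideal A, M.IsMaximal → r ∈ M → d ∉ M)

/-- Property (++): for every `r` there is `d` with `D(r) = V(d)`, i.e. the maximal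
ideals containing `d` are exactly those not containing `r`. -/
def PropertyPlusPlus (A : Type*) [CommRing A] : Prop :=
  ∀ r : A, ∃ d : A, ∀ P : MaximalSpectrum A, d ∈ P.asIdeal ↔ r ∉ P.asIdeal

/-- Divisibility in the localization of a ring at a maximal ideal `P`:
`x` divides `y` in `A_P`. -/
def LocDvd {A : Type*} [CommRing A] (P : MaximalSpectrum A) (x y : A) : Prop :=
  (algebraMap A (Localization.AtPrime P.asIdeal) x) ∣
    algebraMap A (Localization.AtPrime P.asIdeal) y

/-- A Prüfer domain: an integral domain whose localization at every maximal ideal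
is a valuation ring. -/
def IsPrueferDomain (A : Type*) [CommRing A] [IsDomain A] : Prop :=
  ∀ P : MaximalSpectrum A, ValuationRing (Localization.AtPrime P.asIdeal)

/-- Membership in `(U)^{g(x)}`: `r ∈ (U)^{g(x)}` iff there are `Y ∈ U` and `n ∈ ℕ`
such that for all `λ` and all `P ∈ Y_λ`, `x_λ` divides `r_λ ^ n` in the localization
of `D λ` at `P`. -/
def UgMem [∀ l, CommRing (D l)] (U : Set (∀ l, Set (MaximalSpectrum (D l))))
    (x r : ∀ l, D l) : Prop :=
  ∃ Y ∈ U, ∃ n : ℕ, ∀ l, ∀ P ∈ Y l, LocDvd P (x l) (r l ^ n)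

/-- The minimal prime `(0)_{F_U}` as a set: those `r` whose zero set `z r` belongs to
the induced ultrafilter `F_U = { {λ | Y_λ ≠ ∅} : Y ∈ U }` on `Λ`. -/
def ZeroFU [∀ l, CommRing (D l)] (U : Set (∀ l, Set (MaximalSpectrum (D l)))) :
    Set (∀ l, D l) :=
  {r | ∃ Y ∈ U, ZFam r = {l | Y l ≠ ∅}}

lemma locDvd_iff {A : Type*} [CommRing A] (P : MaximalSpectrum A) (x y : A) :
    LocDvd P x y ↔ (algebraMap A (Localization.AtPrime P.asIdeal) x) ∣
      algebraMap A (Localization.AtPrime P.asIdeal) y := Iff.rfl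


section Component
variable {A : Type*} [CommRing A] [IsDomain A]

lemma locDvd_total (hA : ∀ P : MaximalSpectrum A, ValuationRing (Localization.AtPrime P.asIdeal))
    (P : MaximalSpectrum A) (a b : A) : LocDvd P a b ∨ LocDvd P b a := by
  have := hA P
  obtain ⟨c, hc | hc⟩ := PreValuationRing.cond
    (algebraMap A (Localization.AtPrime P.asIdeal) a)
    (algebraMap A (Localization.AtPrime P.asIdeal) b)
  · exact Or.inl ⟨c, hc.symm⟩
  · exact Or.inr ⟨c, hc.symm⟩

lemma locInj (P : MaximalSpectrum A) :
    Function.Injective (algebraMap A (Localization.AtPrime P.asIdeal)) :=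
  IsLocalization.injective _ P.asIdeal.primeCompl_le_nonZeroDivisors

lemma loc_isUnit_iff (P : MaximalSpectrum A) (s : A) :
    IsUnit (algebraMap A (Localization.AtPrime P.asIdeal) s) ↔ s ∉ P.asIdeal :=
  IsLocalization.AtPrime.isUnit_to_map_iff _ P.asIdeal s

lemma not_locDvd_one (P : MaximalSpectrum A) {x : A} (hx : x ∈ P.asIdeal) {u : A}
    (hu : IsUnit (algebraMap A (Localization.AtPrime P.asIdeal) u)) : ¬ LocDvd P x u := by
  intro h
  exact (loc_isUnit_iff P x).mp (isUnit_of_dvd_unit h hu) hx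

end Component

section LemA
variable {A : Type*} [CommRing A] [IsDomain A]

/-- Key Prüfer lemma: decomposition `1 = s' + c` adapted to the pair `(x, b)`. -/
lemma lemA (hA : ∀ P : MaximalSpectrum A, ValuationRing (Localization.AtPrime P.asIdeal))
    (x b : A) :
    ∃ s c s' c' : A, s * b = c * x ∧ s' * b = c' * x ∧ s' + c = 1 ∧
      ∀ P : MaximalSpectrum A, LocDvd P x b → (s ∉ P.asIdeal ∨ s' ∉ P.asIdeal) := by
  by_cases hx0 : x = 0
  · subst hx0
    by_cases hb0 : b = 0
    · subst hb0
      exact ⟨1, 1, 0, 0, by ring, by ring, by ring,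
        fun P _ => Or.inl (fun h => P.isMaximal.ne_top (P.asIdeal.eq_top_of_isUnit_mem h isUnit_one))⟩
    · refine ⟨0, 1, 0, 0, by ring, by ring, by ring, fun P hP => absurd ?_ hb0⟩
      obtain ⟨h, hh⟩ := hP
      rw [map_zero, zero_mul] at hh
      exact locInj P (by rw [hh, map_zero])
  · -- main case
    set J1 : Ideal A :=
      { carrier := {s' | ∃ c', s' * b = c' * x}
        zero_mem' := ⟨0, by ring⟩
        add_mem' := by
          rintro a₁ a₂ ⟨c1, h1⟩ ⟨c2, h2⟩
          exact ⟨c1 + c2, by rw [add_mul, h1, h2]; ring⟩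
        smul_mem' := by
          rintro a y ⟨c1, h1⟩
          exact ⟨a * c1, by simp only [smul_eq_mul]; rw [mul_assoc, h1]; ring⟩ } with hJ1
    set J2 : Ideal A :=
      { carrier := {c | ∃ s, c * x = s * b}
        zero_mem' := ⟨0, by ring⟩
        add_mem' := by
          rintro a₁ a₂ ⟨s1, h1⟩ ⟨s2, h2⟩
          exact ⟨s1 + s2, by rw [add_mul, h1, h2]; ring⟩
        smul_mem' := by
          rintro a y ⟨s1, h1⟩
          exact ⟨a * s1, by simp only [smul_eq_mul]; rw [mul_assoc, h1]; ring⟩ } with hJ2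
    have hsup : J1 ⊔ J2 = ⊤ := by
      by_contra hne
      obtain ⟨M, hM, hle⟩ := Ideal.exists_le_maximal _ hne
      have h1 : J1 ≤ M := le_trans le_sup_left hle
      have h2 : J2 ≤ M := le_trans le_sup_right hle
      set P : MaximalSpectrum A := ⟨M, hM⟩ with hP
      have key : ∀ (y z : A), LocDvd P y z →
          ∃ w t : A, w ∉ M ∧ w * z = t * y := by
        intro y z ⟨h, hh⟩
        obtain ⟨⟨c, u⟩, rfl⟩ := IsLocalization.mk'_surjective P.asIdeal.primeCompl h
        dsimp only at hh
        have heq : algebraMap A (Localization.AtPrime P.asIdeal) (z * u)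
            = algebraMap A (Localization.AtPrime P.asIdeal) (y * c) := by
          rw [map_mul, map_mul, hh, mul_assoc, IsLocalization.mk'_spec]
        obtain ⟨v, hv⟩ := (IsLocalization.eq_iff_exists P.asIdeal.primeCompl
          (Localization.AtPrime P.asIdeal)).mp heq
        exact ⟨(v : A) * u, (v : A) * c, fun hmem => (v * u).2 hmem, by linear_combination hv⟩
      rcases locDvd_total hA P x b with hd | hd
      · obtain ⟨w, t, hw, hwt⟩ := key x b hd
        exact hw (h1 ⟨t, hwt⟩)
      · obtain ⟨w, t, hw, hwt⟩ := key b x hd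
        exact hw (h2 ⟨t, hwt⟩)
    have h1 : (1 : A) ∈ J1 ⊔ J2 := hsup ▸ Submodule.mem_top
    obtain ⟨s', hs', c, hc, hsum⟩ := Submodule.mem_sup.mp h1
    obtain ⟨c', hc'⟩ := hs'
    obtain ⟨s, hs⟩ := hc
    refine ⟨s, c, s', c', hs.symm, hc', hsum, ?_⟩
    intro P hdvd
    by_contra hcon
    push_neg at hcon
    obtain ⟨hsP, hs'P⟩ := hcon
    have hcP : c ∉ P.asIdeal := fun hcP => P.isMaximal.ne_top
      (P.asIdeal.eq_top_iff_one.mpr (hsum ▸ P.asIdeal.add_mem hs'P hcP))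
    -- pass to the localization at P
    set φ := algebraMap A (Localization.AtPrime P.asIdeal) with hφ
    obtain ⟨h, hh⟩ := hdvd
    have heq : φ x * (φ s * h - φ c) = 0 := by
      have := congrArg φ hs
      rw [map_mul, map_mul, hh] at this
      linear_combination -this
    have hxne : φ x ≠ 0 := fun h0 => hx0 (locInj P (by rw [h0, map_zero]))
    have h2 : φ s * h = φ c := by
      rcases mul_eq_zero.mp heq with h0 | h0
      · exact absurd h0 hxne
      · exact sub_eq_zero.mp h0
    have hcunit : IsUnit (φ c) := (loc_isUnit_iff P c).mpr hcP
    have hsunit : IsUnit (φ s) := isUnit_of_dvd_unit ⟨h, h2.symm⟩ hcunit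
    exact (loc_isUnit_iff P s).mp hsunit hsP

end LemA


section BU
variable {B : Type*} [BooleanAlgebra B] {U : Set B}

lemma BU.top_mem (hU : IsBUltrafilter U) : ⊤ ∈ U := by
  obtain ⟨⟨⟨Y, hY⟩, -, -, hup⟩, -⟩ := hU
  exact hup Y hY ⊤ le_top

lemma BU.inf_mem (hU : IsBUltrafilter U) {X Y : B} (hX : X ∈ U) (hY : Y ∈ U) : X ⊓ Y ∈ U :=
  hU.1.2.2.1 X hX Y hY

lemma BU.up_mem (hU : IsBUltrafilter U) {X Y : B} (hX : X ∈ U) (hXY : X ≤ Y) : Y ∈ U :=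
  hU.1.2.2.2 X hX Y hXY

lemma BU.not_bot (hU : IsBUltrafilter U) : ⊥ ∉ U := hU.1.2.1

lemma BU.not_both (hU : IsBUltrafilter U) {X : B} (h1 : X ∈ U) (h2 : Xᶜ ∈ U) : False := by
  have := BU.inf_mem hU h1 h2
  rw [inf_compl_eq_bot] at this
  exact BU.not_bot hU this

lemma BU.of_sup (hU : IsBUltrafilter U) {X Y : B} (h : X ⊔ Y ∈ U) : X ∈ U ∨ Y ∈ U := by
  rcases hU.2 X with hX | hX
  · exact Or.inl hX
  · refine Or.inr (BU.up_mem hU (BU.inf_mem hU h hX) ?_)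
    rw [inf_comm, inf_sup_left]
    simp

lemma BU.not_mem_of_disj (hU : IsBUltrafilter U) {X Y : B} (hY : Y ∈ U) (h : X ⊓ Y = ⊥) :
    X ∉ U := fun hX => BU.not_bot hU (h ▸ BU.inf_mem hU hX hY)

end BU


section Ug
variable {Λ : Type*} {D : Λ → Type*} [∀ l, CommRing (D l)] [∀ l, IsDomain (D l)]
variable {U : Set (∀ l, Set (MaximalSpectrum (D l)))}


lemma exists_mem_of_mem_U (hU : IsBUltrafilter U) {X : ∀ l, Set (MaximalSpectrum (D l))} (hX : X ∈ U) :
    ∃ l, ∃ P, P ∈ X l := by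
  by_contra hc
  push_neg at hc
  have : X = ⊥ := by
    funext l
    exact Set.eq_empty_iff_forall_notMem.mpr (hc l)
  exact BU.not_bot hU (this ▸ hX)

lemma ugMem_subset_U (hU : IsBUltrafilter U) {x : ∀ l, D l} (hx : SFam x ∈ U) {r : ∀ l, D l}
    (hr : UgMem U x r) : SFam r ∈ U := by
  obtain ⟨Y, hY, n, hloc⟩ := hr
  refine BU.up_mem hU (BU.inf_mem hU hY hx) ?_
  intro l P hP
  rw [Pi.inf_apply] at hP
  obtain ⟨hP1, hP2⟩ := hP
  by_contra hrP
  have hu : IsUnit (algebraMap (D l) (Localization.AtPrime P.asIdeal) (r l ^ n)) := by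
    rw [map_pow]
    exact ((loc_isUnit_iff P (r l)).mpr hrP).pow n
  exact not_locDvd_one P hP2 hu (hloc l P hP1)

lemma ugMem_not_one (hU : IsBUltrafilter U) {x : ∀ l, D l} (hx : SFam x ∈ U) :
    ¬ UgMem U x 1 := by
  intro ⟨Y, hY, n, hloc⟩
  obtain ⟨l, P, hP⟩ := exists_mem_of_mem_U hU (BU.inf_mem hU hY hx)
  rw [Pi.inf_apply] at hP
  have hu : IsUnit (algebraMap (D l) (Localization.AtPrime P.asIdeal) ((1 : ∀ l', D l') l ^ n)) := by
    simp
  exact not_locDvd_one P hP.2 hu (hloc l P hP.1)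

lemma ugMem_zero (hU : IsBUltrafilter U) (x : ∀ l, D l) : UgMem U x 0 :=
  ⟨⊤, BU.top_mem hU, 1, fun l P _ => by
    rw [locDvd_iff]
    simp⟩

lemma ugMem_self (hU : IsBUltrafilter U) (x : ∀ l, D l) : UgMem U x x :=
  ⟨⊤, BU.top_mem hU, 1, fun l P _ => by rw [locDvd_iff, pow_one]⟩

lemma ugMem_mul_left (hU : IsBUltrafilter U) {x r : ∀ l, D l} (a : ∀ l, D l) (h : UgMem U x r) :
    UgMem U x (a * r) := by
  obtain ⟨Y, hY, n, hloc⟩ := h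
  refine ⟨Y, hY, n, fun l P hP => ?_⟩
  have := hloc l P hP
  rw [locDvd_iff] at this ⊢
  simp only [Pi.mul_apply, mul_pow, map_mul]
  exact this.mul_left _

lemma ugMem_add (hU : IsBUltrafilter U) {x r s : ∀ l, D l} (hr : UgMem U x r) (hs : UgMem U x s) :
    UgMem U x (r + s) := by
  obtain ⟨Y1, hY1, n1, hloc1⟩ := hr
  obtain ⟨Y2, hY2, n2, hloc2⟩ := hs
  refine ⟨Y1 ⊓ Y2, BU.inf_mem hU hY1 hY2, n1 + n2, fun l P hP => ?_⟩
  rw [Pi.inf_apply] at hP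
  set φ := algebraMap (D l) (Localization.AtPrime P.asIdeal)
  have h1 : φ (r l) ^ n1 ∈ Ideal.span {φ (x l)} := by
    rw [Ideal.mem_span_singleton, ← map_pow]
    exact hloc1 l P hP.1
  have h2 : φ (s l) ^ n2 ∈ Ideal.span {φ (x l)} := by
    rw [Ideal.mem_span_singleton, ← map_pow]
    exact hloc2 l P hP.2
  have := Ideal.add_pow_mem_of_pow_mem_of_le (Ideal.span {φ (x l)}) h1 h2
    (le_trans (Nat.le_succ _) (le_refl _))
  rw [locDvd_iff, ← Ideal.mem_span_singleton, Pi.add_apply, map_pow, map_add]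
  exact this

lemma ugMem_mul_cases (hU : IsBUltrafilter U)
    (hp : ∀ l, ∀ P : MaximalSpectrum (D l), ValuationRing (Localization.AtPrime P.asIdeal))
    {x r s : ∀ l, D l} (h : UgMem U x (r * s)) : UgMem U x r ∨ UgMem U x s := by
  obtain ⟨Y, hY, n, hloc⟩ := h
  set Z : ∀ l, Set (MaximalSpectrum (D l)) :=
    fun l => {P | P ∈ Y l ∧ LocDvd P (x l) (r l ^ (2 * n))} with hZ
  rcases hU.2 Z with hZU | hZU
  · exact Or.inl ⟨Z, hZU, 2 * n, fun l P hP => hP.2⟩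
  · refine Or.inr ⟨Y ⊓ Zᶜ, BU.inf_mem hU hY hZU, 2 * n, fun l P hP => ?_⟩
    rw [Pi.inf_apply] at hP
    obtain ⟨hPY, hPZ⟩ := hP
    rw [Pi.compl_apply, Set.mem_compl_iff] at hPZ
    have hPZ' : ¬ LocDvd P (x l) (r l ^ (2 * n)) := fun hd => hPZ ⟨hPY, hd⟩
    have htot := locDvd_total (hp l) P (r l ^ n) (s l ^ n)
    have hx := hloc l P hPY
    rw [locDvd_iff, map_pow, Pi.mul_apply, map_mul, mul_pow] at hx
    rcases htot with hd | hd
    · rw [locDvd_iff, map_pow, map_pow] at hd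
      rw [locDvd_iff, map_pow, two_mul, pow_add]
      exact dvd_trans hx (mul_dvd_mul_right hd _)
    · exfalso
      apply hPZ'
      rw [locDvd_iff, map_pow, map_pow] at hd
      rw [locDvd_iff, map_pow, two_mul, pow_add]
      exact dvd_trans hx (mul_dvd_mul_left _ hd)

lemma ugMem_comparable (hU : IsBUltrafilter U)
    (hp : ∀ l, ∀ P : MaximalSpectrum (D l), ValuationRing (Localization.AtPrime P.asIdeal))
    (x y : ∀ l, D l) :
    (∀ r, UgMem U x r → UgMem U y r) ∨ (∀ r, UgMem U y r → UgMem U x r) := by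
  set Z : ∀ l, Set (MaximalSpectrum (D l)) := fun l => {P | LocDvd P (y l) (x l)} with hZ
  rcases hU.2 Z with hZU | hZU
  · left
    rintro r ⟨Y, hY, n, hloc⟩
    refine ⟨Y ⊓ Z, BU.inf_mem hU hY hZU, n, fun l P hP => ?_⟩
    rw [Pi.inf_apply] at hP
    have h1 : LocDvd P (y l) (x l) := hP.2
    exact dvd_trans h1 (hloc l P hP.1)
  · right
    rintro r ⟨Y, hY, n, hloc⟩
    refine ⟨Y ⊓ Zᶜ, BU.inf_mem hU hY hZU, n, fun l P hP => ?_⟩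
    rw [Pi.inf_apply] at hP
    obtain ⟨hPY, hPZ⟩ := hP
    rw [Pi.compl_apply, Set.mem_compl_iff] at hPZ
    have h1 : LocDvd P (x l) (y l) := (locDvd_total (hp l) P (y l) (x l)).resolve_left hPZ
    exact dvd_trans h1 (hloc l P hPY)

lemma ugMem_mem_prime (hU : IsBUltrafilter U)
    (hp : ∀ l, ∀ P : MaximalSpectrum (D l), ValuationRing (Localization.AtPrime P.asIdeal))
    {𝔓 : Ideal (∀ l, D l)} (h𝔓 : 𝔓.IsPrime) (hsub : ∀ r ∈ 𝔓, SFam r ∈ U)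
    {x r : ∀ l, D l} (hx : x ∈ 𝔓) (hr : UgMem U x r) : r ∈ 𝔓 := by
  obtain ⟨Y, hY, n, hloc⟩ := hr
  -- apply the key Prüfer lemma componentwise
  have key : ∀ l, ∃ s c s' c' : D l, s * (r l ^ n) = c * (x l) ∧ s' * (r l ^ n) = c' * (x l) ∧
      s' + c = 1 ∧ ∀ P : MaximalSpectrum (D l), LocDvd P (x l) (r l ^ n) →
        (s ∉ P.asIdeal ∨ s' ∉ P.asIdeal) :=
    fun l => lemA (hp l) (x l) (r l ^ n)
  choose s c s' c' hsc hs'c' hsum havoid using key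
  have hmul1 : s * r ^ n = c * x := funext fun l => by
    simpa using hsc l
  have hmul2 : s' * r ^ n = c' * x := funext fun l => by
    simpa using hs'c' l
  -- Y avoids S s ⊓ S s'
  have hdisj : (SFam s ⊓ SFam s') ⊓ Y = ⊥ := by
    funext l
    rw [Pi.inf_apply, Pi.inf_apply, Pi.bot_apply]
    apply Set.eq_empty_iff_forall_notMem.mpr
    rintro P ⟨⟨hPs, hPs'⟩, hPY⟩
    rcases havoid l P (hloc l P hPY) with h | h
    · exact h hPs
    · exact h hPs'
  have hnot : SFam s ∉ U ∨ SFam s' ∉ U := by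
    by_contra hcon
    push_neg at hcon
    exact BU.not_mem_of_disj hU hY hdisj (BU.inf_mem hU hcon.1 hcon.2)
  have hpow : r ^ n ∈ 𝔓 := by
    rcases hnot with h | h
    · have hs𝔓 : s ∉ 𝔓 := fun hmem => h (hsub s hmem)
      have : s * r ^ n ∈ 𝔓 := hmul1 ▸ 𝔓.mul_mem_left c hx
      exact (h𝔓.mem_or_mem this).resolve_left hs𝔓
    · have hs𝔓 : s' ∉ 𝔓 := fun hmem => h (hsub s' hmem)
      have : s' * r ^ n ∈ 𝔓 := hmul2 ▸ 𝔓.mul_mem_left c' hx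
      exact (h𝔓.mem_or_mem this).resolve_left hs𝔓
  rcases Nat.eq_zero_or_pos n with hn | hn
  · subst hn
    rw [pow_zero] at hpow
    exact absurd (𝔓.eq_top_iff_one.mpr hpow) h𝔓.ne_top
  · exact h𝔓.mem_of_pow_mem n hpow

lemma exists_prime_union (hU : IsBUltrafilter U)
    (hp : ∀ l, ∀ P : MaximalSpectrum (D l), ValuationRing (Localization.AtPrime P.asIdeal))
    (X : Set (∀ l, D l)) (hne : X.Nonempty) (hX : ∀ x ∈ X, SFam x ∈ U) :
    ∃ I : Ideal (∀ l, D l), I.IsPrime ∧ ∀ r, (r ∈ I ↔ ∃ x ∈ X, UgMem U x r) := by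
  obtain ⟨x₀, hx₀⟩ := hne
  refine ⟨{ carrier := {r | ∃ x ∈ X, UgMem U x r}
            zero_mem' := ⟨x₀, hx₀, ugMem_zero hU x₀⟩
            add_mem' := ?_
            smul_mem' := ?_ }, ?_, fun r => Iff.rfl⟩
  · rintro r t ⟨xr, hxr, hr⟩ ⟨xt, hxt, ht⟩
    rcases ugMem_comparable hU hp xr xt with hc | hc
    · exact ⟨xt, hxt, ugMem_add hU (hc r hr) ht⟩
    · exact ⟨xr, hxr, ugMem_add hU hr (hc t ht)⟩
  · rintro a r ⟨xr, hxr, hr⟩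
    exact ⟨xr, hxr, ugMem_mul_left hU a hr⟩
  · rw [Ideal.isPrime_iff]
    constructor
    · intro htop
      have h1 : ∃ x ∈ X, UgMem U x 1 := (Ideal.eq_top_iff_one _).mp htop
      obtain ⟨x, hx, hu⟩ := h1
      exact ugMem_not_one hU (hX x hx) hu
    · rintro r t ⟨x, hx, h⟩
      rcases ugMem_mul_cases hU hp h with h' | h'
      · exact Or.inl ⟨x, hx, h'⟩
      · exact Or.inr ⟨x, hx, h'⟩

lemma sigma_mem_lemma {𝔓 : Ideal (∀ l, D l)} (h𝔓 : 𝔓.IsPrime)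
    (t : Finset ↥𝔓) (l : Λ)
    (h : ∀ P : MaximalSpectrum (D l), ∃ i ∈ t, (i : ∀ l', D l') l ∉ P.asIdeal) :
    ∃ a : ↥𝔓 → D l, ∑ i ∈ t, a i * (i : ∀ l', D l') l = 1 := by
  classical
  set Q : Ideal (D l) :=
    { carrier := {e | ∃ a : ↥𝔓 → D l, ∑ i ∈ t, a i * (i : ∀ l', D l') l = e}
      zero_mem' := ⟨0, by simp⟩
      add_mem' := by
        rintro e1 e2 ⟨a1, ha1⟩ ⟨a2, ha2⟩
        exact ⟨a1 + a2, by simp [add_mul, Finset.sum_add_distrib, ha1, ha2]⟩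
      smul_mem' := by
        rintro b e ⟨a, ha⟩
        refine ⟨fun i => b * a i, ?_⟩
        simp only [smul_eq_mul, ← ha, Finset.mul_sum, mul_assoc] } with hQ
  have hgen : ∀ i ∈ t, ((i : ∀ l', D l') l) ∈ Q := by
    intro j hj
    refine ⟨fun i => if i = j then 1 else 0, ?_⟩
    simp only [ite_mul, one_mul, zero_mul,
      Finset.sum_ite_eq' t j (fun i => (i : ∀ l', D l') l)]
    simp [hj]
  have hQtop : Q = ⊤ := by
    by_contra hne
    obtain ⟨M, hM, hle⟩ := Ideal.exists_le_maximal _ hne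
    obtain ⟨i, hi, hni⟩ := h ⟨M, hM⟩
    exact hni (hle (hgen i hi))
  exact (Ideal.eq_top_iff_one _).mp hQtop

lemma exists_bultrafilter {𝔓 : Ideal (∀ l, D l)} (h𝔓 : 𝔓.IsPrime) :
    ∃ U : Set (∀ l, Set (MaximalSpectrum (D l))), IsBUltrafilter U ∧
      ∀ r ∈ 𝔓, SFam r ∈ U := by
  classical
  rcases isEmpty_or_nonempty Λ with hΛ | hΛ
  · exfalso
    have h10 : (1 : ∀ l, D l) = 0 := funext fun l => (hΛ.elim l)
    exact h𝔓.ne_top (𝔓.eq_top_iff_one.mpr (h10 ▸ 𝔓.zero_mem))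
  set σ := (l : Λ) × MaximalSpectrum (D l) with hσ
  set E : (∀ l, Set (MaximalSpectrum (D l))) → Set σ := fun X => {p | p.2 ∈ X p.1} with hE
  have hEinf : ∀ X Y, E (X ⊓ Y) = E X ∩ E Y := by
    intro X Y
    ext p
    simp [hE, Pi.inf_apply]
  have hEcompl : ∀ X, E Xᶜ = (E X)ᶜ := by
    intro X
    ext p
    simp [hE, Pi.compl_apply]
  have hEmono : ∀ X Y, X ≤ Y → E X ⊆ E Y := by
    intro X Y hXY p hp
    exact hXY p.1 hp
  set f : Filter σ := ⨅ r : ↥𝔓, Filter.principal (E (SFam (r : ∀ l, D l))) with hf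
  have hne : f.NeBot := by
    rw [Filter.neBot_iff]
    intro hbot
    have hempty : (∅ : Set σ) ∈ f := by rw [hbot]; exact Filter.mem_bot
    rw [hf, Filter.mem_iInf_finite] at hempty
    obtain ⟨t, ht⟩ := hempty
    rw [Filter.iInf_principal_finset, Filter.mem_principal] at ht
    have hpt : ∀ l, ∀ P : MaximalSpectrum (D l), ∃ i ∈ t, (i : ∀ l', D l') l ∉ P.asIdeal := by
      intro l P
      by_contra hc
      push_neg at hc
      have : (⟨l, P⟩ : σ) ∈ ⋂ i ∈ t, E (SFam (i : ∀ l', D l')) := by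
        rw [Set.mem_iInter₂]
        intro i hi
        exact hc i hi
      exact (ht this)
    have hchoice := fun l => sigma_mem_lemma h𝔓 t l (hpt l)
    choose a ha using hchoice
    have hone : (∑ i ∈ t, (fun l => a l i) * (i : ∀ l', D l')) = 1 := by
      funext l
      rw [Finset.sum_apply]
      simpa using ha l
    have hmem : (∑ i ∈ t, (fun l => a l i) * (i : ∀ l', D l')) ∈ 𝔓 :=
      Ideal.sum_mem _ fun i _ => 𝔓.mul_mem_left _ i.2
    rw [hone] at hmem
    exact h𝔓.ne_top (𝔓.eq_top_iff_one.mpr hmem)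
  obtain ⟨𝒰, h𝒰⟩ := Ultrafilter.exists_le f
  refine ⟨{X | E X ∈ 𝒰}, ⟨⟨⟨⊤, ?_⟩, ?_, ?_, ?_⟩, ?_⟩, ?_⟩
  · show E ⊤ ∈ 𝒰
    have : E ⊤ = Set.univ := by ext p; simp [hE]
    rw [this]
    exact Filter.univ_mem
  · show E ⊥ ∉ 𝒰
    have : E ⊥ = ∅ := by ext p; simp [hE]
    rw [this]
    exact Filter.empty_notMem _
  · intro X hX Y hY
    show E (X ⊓ Y) ∈ 𝒰
    rw [hEinf]
    exact Filter.inter_mem hX hY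
  · intro X hX Y hXY
    exact Filter.mem_of_superset hX (hEmono X Y hXY)
  · intro X
    by_cases hX : E X ∈ 𝒰
    · exact Or.inl hX
    · refine Or.inr ?_
      show E Xᶜ ∈ 𝒰
      rw [hEcompl]
      exact (Ultrafilter.compl_mem_iff_notMem).mpr hX
  · intro r hr
    show E (SFam r) ∈ 𝒰
    exact h𝒰 (Filter.mem_iInf_of_mem ⟨r, hr⟩ (Filter.mem_principal_self _))

end Ug

/-- For a family of Prüfer domains `D l` and `R = ∏ l, D l`:
(1) every prime ideal `𝔓` of `R` is contained in some `(U)` with `U` an ultrafilter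
in `B`; (2) if `𝔓` is prime and `𝔓 ⊆ (U)`, then `𝔓` is the union of the sets
`(U)^{g(x)}` for `x ∈ 𝔓`, and each `(U)^{g(x)}` is a prime ideal of `R` contained in
`(U)`; (3) conversely, for every ultrafilter `U` in `B` and every nonempty `X ⊆ (U)`,
the union of the `(U)^{g(x)}` for `x ∈ X` is a prime ideal of `R`. -/
theorem stmt_18 [∀ l, CommRing (D l)] [∀ l, IsDomain (D l)]
    (hpruefer : ∀ l, IsPrueferDomain (D l)) :
    (∀ 𝔓 : Ideal (∀ l, D l), 𝔓.IsPrime →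
      ∃ U : Set (∀ l, Set (MaximalSpectrum (D l))), IsBUltrafilter U ∧
        ∀ r ∈ 𝔓, SFam r ∈ U) ∧
    (∀ 𝔓 : Ideal (∀ l, D l), 𝔓.IsPrime →
      ∀ U : Set (∀ l, Set (MaximalSpectrum (D l))), IsBUltrafilter U →
        (∀ r ∈ 𝔓, SFam r ∈ U) →
        ((∀ r : ∀ l, D l, r ∈ 𝔓 ↔ ∃ x ∈ 𝔓, UgMem U x r) ∧
          ∀ x ∈ 𝔓, ∃ I : Ideal (∀ l, D l), I.IsPrime ∧
            (∀ r, r ∈ I ↔ UgMem U x r) ∧ ∀ r ∈ I, SFam r ∈ U)) ∧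
    (∀ U : Set (∀ l, Set (MaximalSpectrum (D l))), IsBUltrafilter U →
      ∀ X : Set (∀ l, D l), X.Nonempty → (∀ x ∈ X, SFam x ∈ U) →
        ∃ I : Ideal (∀ l, D l), I.IsPrime ∧
          ∀ r : ∀ l, D l, r ∈ I ↔ ∃ x ∈ X, UgMem U x r) := by
  refine ⟨?_, ?_, ?_⟩
  · intro 𝔓 h𝔓
    exact exists_bultrafilter h𝔓
  · intro 𝔓 h𝔓 U hU hsub
    have hp : ∀ l, ∀ P : MaximalSpectrum (D l),
        ValuationRing (Localization.AtPrime P.asIdeal) := hpruefer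
    constructor
    · intro r
      constructor
      · intro hr
        exact ⟨r, hr, ugMem_self hU r⟩
      · rintro ⟨x, hx, hr⟩
        exact ugMem_mem_prime hU hp h𝔓 hsub hx hr
    · intro x hx
      obtain ⟨I, hIp, hIiff⟩ := exists_prime_union hU hp {x} ⟨x, rfl⟩
        (by intro y hy; rw [Set.mem_singleton_iff] at hy; rw [hy]; exact hsub x hx)
      refine ⟨I, hIp, fun r => (hIiff r).trans (by simp), fun r hr => ?_⟩
      obtain ⟨x', hx', hu⟩ := (hIiff r).mp hr
      rw [Set.mem_singleton_iff] at hx'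
      subst hx'
      exact ugMem_subset_U hU (hsub x' hx) hu
  · intro U hU X hXne hXsub
    have hp : ∀ l, ∀ P : MaximalSpectrum (D l),
        ValuationRing (Localization.AtPrime P.asIdeal) := hpruefer
    exact exists_prime_union hU hp X hXne hXsub
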